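/- Let X, Y ∈ ℝ³ be unit vectors with Y ≠ ±X and set c = XᵀY. Then there exist 3×3 real matrices J and K such that: (i) XᵀJY = c·tr(J) − 1 − c²; (ii) XᵀJX + YᵀJY − c·YᵀJX = tr(J) − 2c; and (iii) J Jᵀ + K Kᵀ = I. -/

import Mathlib

open Matrix

theorem stmt_7 (X Y : Fin 3 → ℝ) (hX : X ⬝ᵥ X = 1) (hY : Y ⬝ᵥ Y = 1)
    (hne : Y ≠ X) (hne' : Y ≠ -X)
    (c : ℝ) (hc : c = X ⬝ᵥ Y) :
    ∃ J K : Matrix (Fin 3) (Fin 3) ℝ,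
      X ⬝ᵥ J.mulVec Y = c * J.trace - 1 - c ^ 2 ∧
      X ⬝ᵥ J.mulVec X + Y ⬝ᵥ J.mulVec Y - c * (Y ⬝ᵥ J.mulVec X) = J.trace - 2 * c ∧
      J * Jᵀ + K * Kᵀ = 1 := by
  subst hc
  refine ⟨Matrix.of (fun i j => (X ⬝ᵥ Y) * (if i = j then (1:ℝ) else 0) + Y i * X j - X i * Y j),
          Matrix.of (fun i j =>
            (![X 1 * Y 2 - X 2 * Y 1, X 2 * Y 0 - X 0 * Y 2, X 0 * Y 1 - X 1 * Y 0] : Fin 3 → ℝ) i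
              * X j), ?_, ?_, ?_⟩
  · simp [dotProduct, mulVec, trace, diag, Fin.sum_univ_three] at *
    linear_combination (-(Y 0 * Y 0 + Y 1 * Y 1 + Y 2 * Y 2)) * hX - hY
  · simp [dotProduct, mulVec, trace, diag, Fin.sum_univ_three] at *
    linear_combination ((X 0 * Y 0 + X 1 * Y 1 + X 2 * Y 2) *
      (1 - (Y 0 * Y 0 + Y 1 * Y 1 + Y 2 * Y 2))) * hX
  · simp only [dotProduct, Fin.sum_univ_three] at hX hY
    ext i j
    fin_cases i <;> fin_cases j <;>
      simp [Matrix.mul_apply, Fin.sum_univ_three, Matrix.one_apply, dotProduct]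
    · linear_combination ((X 1 * Y 2 - X 2 * Y 1) * (X 1 * Y 2 - X 2 * Y 1)
        + (Y 0 * Y 0 + Y 1 * Y 1 + Y 2 * Y 2)) * hX + hY
    · linear_combination ((X 1 * Y 2 - X 2 * Y 1) * (X 2 * Y 0 - X 0 * Y 2)) * hX
    · linear_combination ((X 1 * Y 2 - X 2 * Y 1) * (X 0 * Y 1 - X 1 * Y 0)) * hX
    · linear_combination ((X 2 * Y 0 - X 0 * Y 2) * (X 1 * Y 2 - X 2 * Y 1)) * hX
    · linear_combination ((X 2 * Y 0 - X 0 * Y 2) * (X 2 * Y 0 - X 0 * Y 2)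
        + (Y 0 * Y 0 + Y 1 * Y 1 + Y 2 * Y 2)) * hX + hY
    · linear_combination ((X 2 * Y 0 - X 0 * Y 2) * (X 0 * Y 1 - X 1 * Y 0)) * hX
    · linear_combination ((X 0 * Y 1 - X 1 * Y 0) * (X 1 * Y 2 - X 2 * Y 1)) * hX
    · linear_combination ((X 0 * Y 1 - X 1 * Y 0) * (X 2 * Y 0 - X 0 * Y 2)) * hX
    · linear_combination ((X 0 * Y 1 - X 1 * Y 0) * (X 0 * Y 1 - X 1 * Y 0)
        + (Y 0 * Y 0 + Y 1 * Y 1 + Y 2 * Y 2)) * hX + hY
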